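/- Let p ≥ 2 and place the 2p points B_0, C_0, B_1, C_1, …, B_{p−1}, C_{p−1} in this cyclic order around a circle (B_i at position 2i and C_i at position 2i+1 in ℤ/2p). For a fixed integer k, consider the perfect matching that pairs B_i with C_{(i+k) mod p} for each i. This matching is noncrossing if and only if k ≡ 0 (mod p) or k ≡ p−1 (mod p). -/

import Mathlib

/-- Two pairs `{a, b}` and `{c, d}` of points with positions in `{0, …, n−1}`, placed in
this cyclic order on a circle, cross if (with `a < b`, `c < d`) `a < c < b < d` or
`c < a < d < b`. -/
def PairsCrossNat (e f : Finset ℕ) : Prop :=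
  ∃ a b c d : ℕ, a ∈ e ∧ b ∈ e ∧ c ∈ f ∧ d ∈ f ∧
    ((a < c ∧ c < b ∧ b < d) ∨ (c < a ∧ a < d ∧ d < b))

/-- The pair of the matching joining `B_i` (at position `2i`) to `C_{(i+k) mod p}`
(at position `2((i+k) mod p) + 1`). -/
def bingPair (p : ℕ) (k : ℤ) (i : Fin p) : Finset ℕ :=
  {2 * (i : ℕ), 2 * (((i : ℤ) + k) % (p : ℤ)).toNat + 1}

/-- With points `B_0, C_0, B_1, C_1, …, B_{p−1}, C_{p−1}` in this cyclic order, the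
matching pairing `B_i` with `C_{(i+k) mod p}` is noncrossing iff `k ≡ 0 (mod p)`
or `k ≡ p − 1 (mod p)`. -/
theorem bing_matching_noncrossing_iff (p : ℕ) (hp : 2 ≤ p) (k : ℤ) :
    (∀ i j : Fin p, i ≠ j → ¬ PairsCrossNat (bingPair p k i) (bingPair p k j)) ↔
      (k % (p : ℤ) = 0 ∨ k % (p : ℤ) = (p : ℤ) - 1) := by
  have hp0 : (0:ℤ) < (p:ℤ) := by exact_mod_cast (by omega : 0 < p)
  have hmod0 : 0 ≤ k % (p:ℤ) := Int.emod_nonneg k hp0.ne'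
  have hmodlt : k % (p:ℤ) < p := Int.emod_lt_of_pos k hp0
  set r : ℕ := (k % (p:ℤ)).toNat with hrdef
  have hrcast : (r:ℤ) = k % (p:ℤ) := Int.toNat_of_nonneg hmod0
  have hrlt : r < p := by omega
  have key : ∀ i : Fin p, (((i:ℤ) + k) % (p:ℤ)).toNat = ((i:ℕ) + r) % p := by
    intro i
    have h1 : ((i:ℤ) + k) % (p:ℤ) = (((i:ℕ) + r : ℕ) : ℤ) % (p:ℤ) := by
      conv_lhs => rw [← Int.emod_add_mul_ediv k (p:ℤ)]
      push_cast [hrcast]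
      rw [← add_assoc, Int.add_mul_emod_self_left]
    rw [h1, ← Int.natCast_mod, Int.toNat_natCast]
  have hpair : ∀ i : Fin p, bingPair p k i = {2 * (i:ℕ), 2 * (((i:ℕ) + r) % p) + 1} := by
    intro i; rw [bingPair, key]
  have hiff : (k % (p:ℤ) = 0 ∨ k % (p:ℤ) = (p:ℤ) - 1) ↔ (r = 0 ∨ r = p - 1) := by
    omega
  rw [hiff]
  constructor
  · intro h
    by_contra hc
    push_neg at hc
    obtain ⟨hr0, hr1⟩ := hc
    have h0 : (0:ℕ) < p := by omega
    have h1 : (1:ℕ) < p := by omega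
    apply h ⟨0, h0⟩ ⟨1, h1⟩ (by simp [Fin.ext_iff])
    have hs1 : bingPair p k ⟨0, h0⟩ = {0, 2 * r + 1} := by
      rw [hpair]; norm_num [Nat.mod_eq_of_lt hrlt]
    have hs2 : bingPair p k ⟨1, h1⟩ = {2, 2 * (1 + r) + 1} := by
      rw [hpair]; norm_num [Nat.mod_eq_of_lt (show 1 + r < p by omega)]
    rw [PairsCrossNat, hs1, hs2]
    refine ⟨0, 2 * r + 1, 2, 2 * (1 + r) + 1, ?_, ?_, ?_, ?_, ?_⟩
    · simp
    · simp
    · simp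
    · simp
    · left; omega
  · rintro hor i j hij
    have hij' : (i:ℕ) ≠ (j:ℕ) := fun h => hij (Fin.ext h)
    have hilt : (i:ℕ) < p := i.isLt
    have hjlt : (j:ℕ) < p := j.isLt
    rw [PairsCrossNat, hpair, hpair]
    rintro ⟨a, b, c, d, ha, hb, hc, hd, habcd⟩
    simp only [Finset.mem_insert, Finset.mem_singleton] at ha hb hc hd
    rcases hor with h0 | h1
    · have ei : ((i:ℕ) + r) % p = (i:ℕ) := by
        rw [h0, Nat.add_zero, Nat.mod_eq_of_lt hilt]
      have ej : ((j:ℕ) + r) % p = (j:ℕ) := by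
        rw [h0, Nat.add_zero, Nat.mod_eq_of_lt hjlt]
      rw [ei] at ha hb
      rw [ej] at hc hd
      omega
    · have aux : ∀ m : Fin p, ((m:ℕ) + r) % p + 1 = (m:ℕ) ∨
          ((m:ℕ) = 0 ∧ ((m:ℕ) + r) % p = p - 1) := by
        intro m
        rcases Nat.eq_zero_or_pos (m:ℕ) with hm | hm
        · right
          refine ⟨hm, ?_⟩
          rw [hm, h1, Nat.zero_add, Nat.mod_eq_of_lt (by omega)]
        · left
          have hmp : (m:ℕ) < p := m.isLt
          have hrw : (m:ℕ) + r = ((m:ℕ) - 1) + p := by omega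
          rw [hrw, Nat.add_mod_right, Nat.mod_eq_of_lt (by omega)]
          omega
      have hai := aux i
      have haj := aux j
      generalize hgi : ((i:ℕ) + r) % p = mi at ha hb hai
      generalize hgj : ((j:ℕ) + r) % p = mj at hc hd haj
      omega
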